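/- The sum over all permutations p of length n (n ≥ 2) of C(p)·(C(p)−1), where C(p) is the number of bonds of p, equals 4·(n−2)!·(n−2)². -/

import Mathlib

open Finset

/-- `del p i`: delete the `i`-th entry of `p` and relabel order-isomorphically. -/
def del {n : ℕ} (p : Equiv.Perm (Fin (n + 1))) (i : Fin (n + 1)) : Equiv.Perm (Fin n) :=
  (Tuple.sort fun j => p (i.succAbove j))⁻¹

/-- `D1 p`: the set of `(n-1)`-patterns of `p`. -/
def D1 {n : ℕ} (p : Equiv.Perm (Fin (n + 1))) : Finset (Equiv.Perm (Fin n)) :=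
  Finset.univ.image (del p)

/-- `ins q j k`: insert the value `k - 1/2` just left of position `j` and relabel. -/
def ins {n : ℕ} (q : Equiv.Perm (Fin n)) (j k : Fin (n + 1)) : Equiv.Perm (Fin (n + 1)) :=
  (finSuccEquiv' j).trans ((Equiv.optionCongr q).trans (finSuccEquiv' k).symm)

/-- `C p`: the number of bonds of `p` (adjacent positions with values differing by 1). -/
def C {n : ℕ} (p : Equiv.Perm (Fin (n + 1))) : ℕ :=
  (Finset.univ.filter fun i : Fin n =>
    Nat.dist (p i.castSucc).val (p i.succ).val = 1).card

/-- minimum gap of an injective word `f`, via the taxicab metric on (index, value). -/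
noncomputable def mgF {n : ℕ} (f : Fin n → ℕ) : ℕ :=
  sInf {m : ℕ | ∃ i j : Fin n, i < j ∧ Nat.dist i.val j.val + Nat.dist (f i) (f j) = m}

/-- minimum gap of a permutation. -/
noncomputable def mg {n : ℕ} (p : Equiv.Perm (Fin n)) : ℕ := mgF fun i => (p i).val

/-- the span of entries `p i` and `p j`: indices of entries strictly between them
horizontally or vertically. -/
def span {n : ℕ} (p : Equiv.Perm (Fin n)) (i j : Fin n) : Finset (Fin n) :=
  Finset.univ.filter fun m =>
    (i < m ∧ m < j) ∨ (min (p i) (p j) < p m ∧ p m < max (p i) (p j))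

/-- the pattern of `p` after deleting the entries at positions in `S`, encoded as the
list of (0-based) ranks of the remaining entries in positional order. -/
def patList {n : ℕ} (p : Equiv.Perm (Fin n)) (S : Finset (Fin n)) : List ℕ :=
  let l := (Sᶜ.sort (· ≤ ·)).map fun t => (p t).val
  l.map fun v => (l.filter fun w => w < v).length

/-- `Dk p k`: the set of distinct `(n-k)`-patterns of `p`. -/
def Dk {n : ℕ} (p : Equiv.Perm (Fin n)) (k : ℕ) : Finset (List ℕ) :=
  (Finset.univ.filter fun S : Finset (Fin n) => S.card = k).image (patList p)

open Function


lemma ext_count {m k : ℕ} {t v : Fin k → Fin m} (ht : Injective t) (hv : Injective v) :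
    Fintype.card {p : Equiv.Perm (Fin m) // ∀ x, p (t x) = v x} = (m - k).factorial := by
  classical
  let e₀ : Set.range t ≃ Set.range v :=
    (Equiv.ofInjective t ht).symm.trans (Equiv.ofInjective v hv)
  have key : {p : Equiv.Perm (Fin m) // ∀ x, p (t x) = v x} ≃
      (↥((Set.range t)ᶜ : Set (Fin m)) ≃ ↥((Set.range v)ᶜ : Set (Fin m))) := by
    refine (Equiv.subtypeEquivRight ?_).trans (Equiv.Set.compl e₀)
    intro p
    constructor
    · rintro h ⟨y, x, rfl⟩
      simp [e₀, h x]
    · intro h x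
      have := h ⟨t x, x, rfl⟩
      simpa [e₀] using this
  rw [Fintype.card_congr key]
  have h1 : Fintype.card ((Set.range t)ᶜ : Set (Fin m)) = m - k := by
    rw [Fintype.card_compl_set, Set.card_range_of_injective ht, Fintype.card_fin, Fintype.card_fin]
  have h2 : Fintype.card ((Set.range v)ᶜ : Set (Fin m)) = m - k := by
    rw [Fintype.card_compl_set, Set.card_range_of_injective hv, Fintype.card_fin, Fintype.card_fin]
  rw [Fintype.card_equiv (Fintype.equivOfCardEq (h1.trans h2.symm)), h1]

lemma count_pred {m k : ℕ} {t : Fin k → Fin m} (ht : Injective t)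
    (Q : (Fin k → Fin m) → Prop) [DecidablePred Q] :
    (univ.filter fun p : Equiv.Perm (Fin m) => Q fun x => p (t x)).card
      = (univ.filter fun f : Fin k → Fin m => Injective f ∧ Q f).card
          * (m - k).factorial := by
  classical
  rw [Finset.card_eq_sum_card_fiberwise (f := fun p : Equiv.Perm (Fin m) => fun x => p (t x))
    (t := univ.filter fun f : Fin k → Fin m => Injective f ∧ Q f) ?_]
  · rw [Finset.sum_congr rfl (fun f hf => ?_), Finset.sum_const, smul_eq_mul]
    obtain ⟨hfi, hfQ⟩ := (Finset.mem_filter.mp hf).2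
    have : ((univ.filter fun p : Equiv.Perm (Fin m) => Q fun x => p (t x)).filter
        fun p => (fun x => p (t x)) = f)
        = univ.filter fun p : Equiv.Perm (Fin m) => ∀ x, p (t x) = f x := by
      ext p
      simp only [Finset.mem_filter, Finset.mem_univ, true_and]
      constructor
      · rintro ⟨-, h⟩ x; exact congrFun h x
      · intro h
        have he : (fun x => p (t x)) = f := funext h
        exact ⟨he ▸ hfQ, he⟩
    rw [this, ← Fintype.card_subtype, ext_count ht hfi]
  · intro p hp
    simp only [Finset.mem_coe, Finset.mem_filter, Finset.mem_univ, true_and]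
    exact ⟨fun a b hab => ht (p.injective hab), (Finset.mem_filter.mp (Finset.mem_coe.mp hp)).2⟩


lemma inj3 {m : ℕ} {a b c : Fin m} (h1 : a ≠ b) (h2 : a ≠ c) (h3 : b ≠ c) :
    Injective ![a, b, c] := by
  intro i j h
  fin_cases i <;> fin_cases j <;> simp_all

def g3 (n : ℕ) : Fin n × Bool → (Fin 3 → Fin (n + 2)) := fun z =>
  if z.2 then ![⟨z.1.val, by omega⟩, ⟨z.1.val + 1, by omega⟩, ⟨z.1.val + 2, by omega⟩]
  else ![⟨z.1.val + 2, by omega⟩, ⟨z.1.val + 1, by omega⟩, ⟨z.1.val, by omega⟩]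

lemma card_run3 (n : ℕ) :
    (univ.filter fun f : Fin 3 → Fin (n + 2) => Injective f ∧
      Nat.dist (f 0).val (f 1).val = 1 ∧ Nat.dist (f 1).val (f 2).val = 1).card = 2 * n := by
  classical
  have himg : (univ.filter fun f : Fin 3 → Fin (n + 2) => Injective f ∧
      Nat.dist (f 0).val (f 1).val = 1 ∧ Nat.dist (f 1).val (f 2).val = 1)
      = Finset.image (g3 n) univ := by
    ext f
    simp only [Finset.mem_filter, Finset.mem_univ, true_and, Finset.mem_image]
    constructor
    · rintro ⟨hinj, h1, h2⟩
      have hac : (f 0).val ≠ (f 2).val := fun h => by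
        have : (0 : Fin 3) = 2 := hinj (Fin.ext h); simp at this
      simp only [Nat.dist] at h1 h2
      rcases Nat.lt_or_ge (f 0).val (f 1).val with hlt | hge
      · -- ascending : f1 = f0+1, and then f2 = f1+1
        refine ⟨(⟨(f 0).val, by omega⟩, true), ?_⟩
        funext i
        fin_cases i <;> simp [g3] <;> apply Fin.ext <;> simp <;> omega
      · refine ⟨(⟨(f 2).val, by omega⟩, false), ?_⟩
        funext i
        fin_cases i <;> simp [g3] <;> apply Fin.ext <;> simp <;> omega
    · rintro ⟨⟨u, b⟩, rfl⟩
      cases b <;>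
        refine ⟨inj3 ?_ ?_ ?_, ?_, ?_⟩ <;>
          simp [g3, Fin.ext_iff, Nat.dist] <;> omega
  rw [himg, Finset.card_image_of_injective _ ?_, Finset.card_univ]
  · simp [Fintype.card_prod]; ring
  · rintro ⟨u, b⟩ ⟨u', b'⟩ h
    have h0 := congrFun h 0
    have h1 := congrFun h 1
    cases b <;> cases b' <;> simp [g3, Fin.ext_iff] at h0 h1 <;>
      · ext <;> simp <;> omega


lemma cardA0 (n : ℕ) :
    (univ.filter fun z : Fin (n+1) × Fin (n+1) => z.1.val = z.2.val).card = n + 1 := by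
  classical
  have : (univ.filter fun z : Fin (n+1) × Fin (n+1) => z.1.val = z.2.val)
      = Finset.image (fun u : Fin (n+1) => (u, u)) univ := by
    ext ⟨a, b⟩
    simp only [Finset.mem_filter, Finset.mem_univ, true_and, Finset.mem_image]
    constructor
    · intro h; exact ⟨a, by rw [Fin.ext_iff.mpr h.symm]⟩
    · rintro ⟨u, h⟩; simp only [Prod.ext_iff] at h; rw [← h.1, ← h.2]
  rw [this, Finset.card_image_of_injective _ (fun a b h => by simpa [Prod.ext_iff] using h),
    Finset.card_univ, Fintype.card_fin]

lemma cardA1 (n : ℕ) :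
    (univ.filter fun z : Fin (n+1) × Fin (n+1) => z.2.val = z.1.val + 1).card = n := by
  classical
  have : (univ.filter fun z : Fin (n+1) × Fin (n+1) => z.2.val = z.1.val + 1)
      = Finset.image (fun u : Fin n => (u.castSucc, u.succ)) univ := by
    ext ⟨a, b⟩
    simp only [Finset.mem_filter, Finset.mem_univ, true_and, Finset.mem_image]
    constructor
    · intro h
      refine ⟨⟨a.val, by omega⟩, ?_⟩
      simp [Prod.ext_iff, Fin.ext_iff]; omega
    · rintro ⟨u, h⟩
      simp only [Prod.ext_iff, Fin.ext_iff, Fin.val_succ, Fin.coe_castSucc] at h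
      omega
  rw [this, Finset.card_image_of_injective _ ?_, Finset.card_univ, Fintype.card_fin]
  intro a b h
  simp only [Prod.ext_iff, Fin.ext_iff, Fin.val_succ, Fin.coe_castSucc] at h
  exact Fin.ext h.1

lemma cardA2 (n : ℕ) :
    (univ.filter fun z : Fin (n+1) × Fin (n+1) => z.1.val = z.2.val + 1).card = n := by
  classical
  have : (univ.filter fun z : Fin (n+1) × Fin (n+1) => z.1.val = z.2.val + 1)
      = Finset.image (fun z : Fin (n+1) × Fin (n+1) => (z.2, z.1))
        (univ.filter fun z : Fin (n+1) × Fin (n+1) => z.2.val = z.1.val + 1) := by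
    ext ⟨a, b⟩
    simp only [Finset.mem_filter, Finset.mem_univ, true_and, Finset.mem_image]
    constructor
    · intro h; exact ⟨(b, a), by simpa using h, rfl⟩
    · rintro ⟨⟨c, d⟩, h, h2⟩; simp_all [Prod.ext_iff]
  rw [this, Finset.card_image_of_injective _ (fun a b h => by simp_all [Prod.ext_iff]), cardA1]

lemma card_adj (n : ℕ) :
    (univ.filter fun z : Fin (n+1) × Fin (n+1) => Nat.dist z.1.val z.2.val = 1).card
      = 2 * n := by
  classical
  have : (univ.filter fun z : Fin (n+1) × Fin (n+1) => Nat.dist z.1.val z.2.val = 1)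
      = (univ.filter fun z : Fin (n+1) × Fin (n+1) => z.2.val = z.1.val + 1)
        ∪ (univ.filter fun z : Fin (n+1) × Fin (n+1) => z.1.val = z.2.val + 1) := by
    rw [← Finset.filter_or]
    exact Finset.filter_congr fun z _ => by simp [Nat.dist]; omega
  rw [this, Finset.card_union_of_disjoint, cardA1, cardA2]; · omega
  rw [Finset.disjoint_left]
  intro z h1 h2
  simp only [Finset.mem_filter] at h1 h2
  omega

lemma card_gap2 (n : ℕ) :
    (univ.filter fun z : Fin (n+1) × Fin (n+1) => 2 ≤ Nat.dist z.1.val z.2.val).card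
      = n ^ 2 - n := by
  classical
  have hpart := Finset.card_filter_add_card_filter_not
    (s := (univ : Finset (Fin (n+1) × Fin (n+1))))
    (p := fun z => 2 ≤ Nat.dist z.1.val z.2.val)
  have hneg : (univ.filter fun z : Fin (n+1) × Fin (n+1) =>
      ¬ 2 ≤ Nat.dist z.1.val z.2.val).card = (3 * n) + 1 := by
    have : (univ.filter fun z : Fin (n+1) × Fin (n+1) => ¬ 2 ≤ Nat.dist z.1.val z.2.val)
        = (univ.filter fun z : Fin (n+1) × Fin (n+1) => z.1.val = z.2.val)
          ∪ (univ.filter fun z : Fin (n+1) × Fin (n+1) => Nat.dist z.1.val z.2.val = 1) := by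
      rw [← Finset.filter_or]
      exact Finset.filter_congr fun z _ => by simp [Nat.dist]; omega
    rw [this, Finset.card_union_of_disjoint, cardA0, card_adj]; · omega
    rw [Finset.disjoint_left]
    intro z h1 h2
    simp only [Finset.mem_filter] at h1 h2
    simp only [Nat.dist] at h1 h2
    omega
  rw [hneg] at hpart
  have hc : (univ : Finset (Fin (n+1) × Fin (n+1))).card = n * n + 2 * n + 1 := by
    rw [Finset.card_univ, Fintype.card_prod, Fintype.card_fin]; ring
  rw [hc] at hpart
  have : n ^ 2 = n * n := by ring
  omega


lemma inj4 {m : ℕ} {a b c d : Fin m} (h1 : a ≠ b) (h2 : a ≠ c) (h3 : a ≠ d)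
    (h4 : b ≠ c) (h5 : b ≠ d) (h6 : c ≠ d) : Injective ![a, b, c, d] := by
  intro i j h
  fin_cases i <;> fin_cases j <;> simp_all

def g4 (n : ℕ) : ((Fin (n+1) × Fin (n+1)) × Bool × Bool) → (Fin 4 → Fin (n + 2)) := fun z =>
  ![if z.2.1 then z.1.1.castSucc else z.1.1.succ, if z.2.1 then z.1.1.succ else z.1.1.castSucc,
    if z.2.2 then z.1.2.castSucc else z.1.2.succ, if z.2.2 then z.1.2.succ else z.1.2.castSucc]

lemma card_run4 (n : ℕ) :
    (univ.filter fun f : Fin 4 → Fin (n + 2) => Injective f ∧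
      Nat.dist (f 0).val (f 1).val = 1 ∧ Nat.dist (f 2).val (f 3).val = 1).card
      = 4 * (n ^ 2 - n) := by
  classical
  set s : Finset ((Fin (n+1) × Fin (n+1)) × Bool × Bool) :=
    (univ.filter fun w : Fin (n+1) × Fin (n+1) => 2 ≤ Nat.dist w.1.val w.2.val) ×ˢ univ with hs
  have himg : (univ.filter fun f : Fin 4 → Fin (n + 2) => Injective f ∧
      Nat.dist (f 0).val (f 1).val = 1 ∧ Nat.dist (f 2).val (f 3).val = 1)
      = Finset.image (g4 n) s := by
    ext f
    simp only [Finset.mem_filter, Finset.mem_univ, true_and, Finset.mem_image]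
    constructor
    · rintro ⟨hinj, h1, h2⟩
      have hne : ∀ i j : Fin 4, i ≠ j → (f i).val ≠ (f j).val :=
        fun i j hij h => hij (hinj (Fin.ext h))
      have h02 := hne 0 2 (by decide)
      have h03 := hne 0 3 (by decide)
      have h12 := hne 1 2 (by decide)
      have h13 := hne 1 3 (by decide)
      simp only [Nat.dist] at h1 h2
      have hmem : ∀ a b : Fin (n+1), 2 ≤ Nat.dist a.val b.val → ((a, b), true, true) ∈ s ∧
          True := fun a b h => ⟨by rw [hs, Finset.mem_product, Finset.mem_filter]; simp [Nat.dist] at *; omega, trivial⟩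
      rcases Nat.lt_or_ge (f 0).val (f 1).val with c1 | c1 <;>
        rcases Nat.lt_or_ge (f 2).val (f 3).val with c2 | c2
      · refine ⟨((⟨(f 0).val, by omega⟩, ⟨(f 2).val, by omega⟩), true, true), ?_, ?_⟩
        · rw [hs, Finset.mem_product, Finset.mem_filter]; simp [Nat.dist]; omega
        · funext i; fin_cases i <;> simp [g4] <;> apply Fin.ext <;> simp <;> omega
      · refine ⟨((⟨(f 0).val, by omega⟩, ⟨(f 3).val, by omega⟩), true, false), ?_, ?_⟩
        · rw [hs, Finset.mem_product, Finset.mem_filter]; simp [Nat.dist]; omega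
        · funext i; fin_cases i <;> simp [g4] <;> apply Fin.ext <;> simp <;> omega
      · refine ⟨((⟨(f 1).val, by omega⟩, ⟨(f 2).val, by omega⟩), false, true), ?_, ?_⟩
        · rw [hs, Finset.mem_product, Finset.mem_filter]; simp [Nat.dist]; omega
        · funext i; fin_cases i <;> simp [g4] <;> apply Fin.ext <;> simp <;> omega
      · refine ⟨((⟨(f 1).val, by omega⟩, ⟨(f 3).val, by omega⟩), false, false), ?_, ?_⟩
        · rw [hs, Finset.mem_product, Finset.mem_filter]; simp [Nat.dist]; omega
        · funext i; fin_cases i <;> simp [g4] <;> apply Fin.ext <;> simp <;> omega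
    · rintro ⟨⟨⟨a, b⟩, c, d⟩, hz, rfl⟩
      simp only [hs, Finset.mem_product, Finset.mem_filter, Finset.mem_univ, true_and] at hz
      simp only [Nat.dist] at hz
      cases c <;> cases d <;>
        refine ⟨inj4 ?_ ?_ ?_ ?_ ?_ ?_, ?_, ?_⟩ <;>
          simp [g4, Fin.ext_iff, Nat.dist] <;> omega
  rw [himg, Finset.card_image_of_injective _ ?_]
  · rw [hs, Finset.card_product, card_gap2, Finset.card_univ]
    simp [Fintype.card_prod]; ring
  · rintro ⟨⟨a, b⟩, c, d⟩ ⟨⟨a', b'⟩, c', d'⟩ h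
    have h0 := congrFun h 0
    have h1 := congrFun h 1
    have h2 := congrFun h 2
    have h3 := congrFun h 3
    cases c <;> cases c' <;> cases d <;> cases d' <;>
      simp [g4, Fin.ext_iff, Matrix.cons_val_two, Matrix.cons_val_three,
        Matrix.tail_cons] at h0 h1 h2 h3 <;>
      · simp [Prod.ext_iff, Fin.ext_iff]
        omega


lemma Npair_adj (n : ℕ) (i j : Fin (n+1)) (hj : j.val = i.val + 1) :
    (univ.filter fun p : Equiv.Perm (Fin (n+2)) =>
      Nat.dist (p i.castSucc).val (p i.succ).val = 1 ∧
        Nat.dist (p j.castSucc).val (p j.succ).val = 1).card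
      = (2 * n) * (n - 1).factorial := by
  classical
  have hcast : j.castSucc = i.succ := Fin.ext (by simp [hj])
  have ht : Injective ![i.castSucc, (i.succ : Fin (n+2)), j.succ] := by
    apply inj3 <;> simp [Fin.ext_iff] <;> omega
  have heq : (univ.filter fun p : Equiv.Perm (Fin (n+2)) =>
      Nat.dist (p i.castSucc).val (p i.succ).val = 1 ∧
        Nat.dist (p j.castSucc).val (p j.succ).val = 1)
      = univ.filter fun p : Equiv.Perm (Fin (n+2)) =>
        (fun f : Fin 3 → Fin (n+2) =>
          Nat.dist (f 0).val (f 1).val = 1 ∧ Nat.dist (f 1).val (f 2).val = 1)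
          fun x => p (![i.castSucc, (i.succ : Fin (n+2)), j.succ] x) := by
    apply Finset.filter_congr
    intro p _
    simp [hcast]
  rw [heq, count_pred ht (fun f : Fin 3 → Fin (n+2) =>
    Nat.dist (f 0).val (f 1).val = 1 ∧ Nat.dist (f 1).val (f 2).val = 1), card_run3]
  congr 2

lemma Npair_far (n : ℕ) (i j : Fin (n+1)) (hij : i.val + 2 ≤ j.val) :
    (univ.filter fun p : Equiv.Perm (Fin (n+2)) =>
      Nat.dist (p i.castSucc).val (p i.succ).val = 1 ∧
        Nat.dist (p j.castSucc).val (p j.succ).val = 1).card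
      = (4 * (n ^ 2 - n)) * (n - 2).factorial := by
  classical
  have ht : Injective ![i.castSucc, (i.succ : Fin (n+2)), j.castSucc, j.succ] := by
    apply inj4 <;> simp [Fin.ext_iff] <;> omega
  have heq : (univ.filter fun p : Equiv.Perm (Fin (n+2)) =>
      Nat.dist (p i.castSucc).val (p i.succ).val = 1 ∧
        Nat.dist (p j.castSucc).val (p j.succ).val = 1)
      = univ.filter fun p : Equiv.Perm (Fin (n+2)) =>
        (fun f : Fin 4 → Fin (n+2) =>
          Nat.dist (f 0).val (f 1).val = 1 ∧ Nat.dist (f 2).val (f 3).val = 1)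
          fun x => p (![i.castSucc, (i.succ : Fin (n+2)), j.castSucc, j.succ] x) := by
    apply Finset.filter_congr
    intro p _
    simp
  rw [heq, count_pred ht (fun f : Fin 4 → Fin (n+2) =>
    Nat.dist (f 0).val (f 1).val = 1 ∧ Nat.dist (f 2).val (f 3).val = 1), card_run4]
  congr 2


lemma arith (n : ℕ) :
    (n ^ 2 - n) * ((4 * (n ^ 2 - n)) * (n - 2).factorial)
      + (2 * n) * ((2 * n) * (n - 1).factorial) = 4 * n.factorial * n ^ 2 := by
  match n with
  | 0 => simp
  | 1 => simp [Nat.factorial]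
  | (k + 2) =>
    have h1 : (k + 2) ^ 2 - (k + 2) = (k + 2) * (k + 1) := by
      have : (k + 2) ^ 2 = (k + 2) * (k + 2) := by ring
      rw [this]
      have : (k+2) * (k+2) = (k+2)*(k+1) + (k+2) := by ring
      omega
    have h2 : (k + 2) - 2 = k := by omega
    have h3 : (k + 2) - 1 = k + 1 := by omega
    rw [h1, h2, h3, show (k+2).factorial = (k+2)*((k+1)*k.factorial) by
      rw [Nat.factorial_succ, Nat.factorial_succ], Nat.factorial_succ]
    ring

theorem stmt7 (n : ℕ) :
    ∑ p : Equiv.Perm (Fin (n + 2)), C p * (C p - 1)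
      = 4 * Nat.factorial n * n ^ 2 := by
  classical
  have hmul : ∀ a : ℕ, a * (a - 1) = a * a - a := by
    intro a
    match a with
    | 0 => simp
    | (t + 1) =>
      simp only [Nat.add_sub_cancel]
      have : (t+1) * (t+1) = (t+1)*t + (t+1) := by ring
      omega
  have hCval : ∀ p : Equiv.Perm (Fin (n+2)), C p * (C p - 1)
      = (univ.filter fun z : Fin (n+1) × Fin (n+1) =>
          z.1 ≠ z.2 ∧ Nat.dist (p z.1.castSucc).val (p z.1.succ).val = 1 ∧
            Nat.dist (p z.2.castSucc).val (p z.2.succ).val = 1).card := by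
    intro p
    rw [hmul, show C p = (univ.filter fun i : Fin (n+1) =>
        Nat.dist (p i.castSucc).val (p i.succ).val = 1).card from rfl,
      ← Finset.offDiag_card]
    congr 1
    ext z
    simp only [Finset.mem_offDiag, Finset.mem_filter, Finset.mem_univ, true_and]
    tauto
  rw [Finset.sum_congr rfl fun p _ => hCval p]
  simp only [Finset.card_filter]
  rw [Finset.sum_comm]
  rw [Finset.sum_congr rfl fun z (_ : z ∈ (univ : Finset (Fin (n+1) × Fin (n+1)))) =>
    (Finset.card_filter _ _).symm]
  -- now : ∑ z, N z  where N z = card of perms with the pair condition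
  rw [← Finset.sum_filter_add_sum_filter_not univ
    (fun z : Fin (n+1) × Fin (n+1) => 2 ≤ Nat.dist z.1.val z.2.val)
    (fun z => (univ.filter fun p : Equiv.Perm (Fin (n+2)) =>
      z.1 ≠ z.2 ∧ Nat.dist (p z.1.castSucc).val (p z.1.succ).val = 1 ∧
        Nat.dist (p z.2.castSucc).val (p z.2.succ).val = 1).card)]
  have hfar : ∀ z ∈ univ.filter
      (fun z : Fin (n+1) × Fin (n+1) => 2 ≤ Nat.dist z.1.val z.2.val),
      (univ.filter fun p : Equiv.Perm (Fin (n+2)) =>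
        z.1 ≠ z.2 ∧ Nat.dist (p z.1.castSucc).val (p z.1.succ).val = 1 ∧
          Nat.dist (p z.2.castSucc).val (p z.2.succ).val = 1).card
        = (4 * (n ^ 2 - n)) * (n - 2).factorial := by
    intro z hz
    simp only [Finset.mem_filter, Finset.mem_univ, true_and] at hz
    have hne : z.1 ≠ z.2 := by
      intro h; rw [h] at hz; simp [Nat.dist] at hz
    rw [Finset.filter_congr (fun p _ => by simp [hne] :
      ∀ p ∈ (univ : Finset (Equiv.Perm (Fin (n+2)))),
        ((z.1 ≠ z.2 ∧ Nat.dist (p z.1.castSucc).val (p z.1.succ).val = 1 ∧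
          Nat.dist (p z.2.castSucc).val (p z.2.succ).val = 1) ↔
        (Nat.dist (p z.1.castSucc).val (p z.1.succ).val = 1 ∧
          Nat.dist (p z.2.castSucc).val (p z.2.succ).val = 1)))]
    rcases Nat.lt_or_ge z.1.val z.2.val with hc | hc
    · exact Npair_far n z.1 z.2 (by simp [Nat.dist] at hz; omega)
    · rw [Finset.filter_congr (fun p _ => (and_comm))]
      exact Npair_far n z.2 z.1 (by simp [Nat.dist] at hz; omega)
  have hnear : ∀ z ∈ univ.filter
      (fun z : Fin (n+1) × Fin (n+1) => ¬ 2 ≤ Nat.dist z.1.val z.2.val),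
      (univ.filter fun p : Equiv.Perm (Fin (n+2)) =>
        z.1 ≠ z.2 ∧ Nat.dist (p z.1.castSucc).val (p z.1.succ).val = 1 ∧
          Nat.dist (p z.2.castSucc).val (p z.2.succ).val = 1).card
        = (if z.1 = z.2 then 0 else (2 * n) * (n - 1).factorial) := by
    intro z hz
    simp only [Finset.mem_filter, Finset.mem_univ, true_and] at hz
    by_cases he : z.1 = z.2
    · rw [if_pos he, Finset.card_eq_zero]
      apply Finset.filter_false_of_mem
      intro p _
      simp [he]
    · rw [if_neg he]
      have hne : z.1.val ≠ z.2.val := fun h => he (Fin.ext h)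
      rw [Finset.filter_congr (fun p _ => by simp [he] :
        ∀ p ∈ (univ : Finset (Equiv.Perm (Fin (n+2)))),
          ((z.1 ≠ z.2 ∧ Nat.dist (p z.1.castSucc).val (p z.1.succ).val = 1 ∧
            Nat.dist (p z.2.castSucc).val (p z.2.succ).val = 1) ↔
          (Nat.dist (p z.1.castSucc).val (p z.1.succ).val = 1 ∧
            Nat.dist (p z.2.castSucc).val (p z.2.succ).val = 1)))]
      rcases Nat.lt_or_ge z.1.val z.2.val with hc | hc
      · exact Npair_adj n z.1 z.2 (by simp [Nat.dist] at hz; omega)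
      · rw [Finset.filter_congr (fun p _ => (and_comm))]
        exact Npair_adj n z.2 z.1 (by simp [Nat.dist] at hz; omega)
  rw [Finset.sum_congr rfl hfar, Finset.sum_congr rfl hnear, Finset.sum_const,
    card_gap2, smul_eq_mul]
  rw [Finset.sum_ite, Finset.sum_const_zero, Finset.sum_const, smul_eq_mul, zero_add]
  have hcard2 : ((univ.filter fun z : Fin (n+1) × Fin (n+1) =>
      ¬ 2 ≤ Nat.dist z.1.val z.2.val).filter fun z => ¬ z.1 = z.2).card = 2 * n := by
    rw [Finset.filter_filter, ← card_adj n]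
    refine congrArg Finset.card (Finset.filter_congr ?_)
    intro z _
    simp only [Finset.mem_univ, Nat.dist, ne_eq, Fin.ext_iff]
    constructor
    · rintro ⟨h1, h2⟩
      omega
    · intro h
      refine ⟨by omega, fun h2 => by rw [h2] at h; omega⟩
  rw [hcard2]
  exact arith n
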